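/- Let l ≥ 3 and let B^{(1),ap}_{l-1} denote the set of aperiodic Lusztig data of type A^{(1)}_{l-1}. Then a ∈ B^{(1)}_{l-1} satisfies ε_p(a) = 0 for all p if and only if a = a_z for some z ∈ Z, where a_z is defined by (a_z)_{i,j} = z_{j-i}. In particular, the set of maximal elements of B^{(1)}_{l-1} equals {a_z : z ∈ Z}. -/

import Mathlib

/-- `A_k^{(p)}(a) = ∑_{s ≤ k} (a_{s,p+1} - a_{s-1,p})`; since `a_{i,j} = 0`
for `j - i ≥ N`, all terms with `s < p + 1 - N` vanish and the sum equals the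
finite sum over `p + 1 - N ≤ s ≤ k`. -/
noncomputable def Acoef (a : ℤ → ℤ → ℕ) (N : ℕ) (p k : ℤ) : ℤ :=
  ∑ s ∈ Finset.Icc (p + 1 - (N : ℤ)) k, ((a s (p + 1) : ℤ) - (a (s - 1) p : ℤ))

/-- `ε_p(a) = max {A_k^{(p)}(a) : k ≤ p}`. -/
noncomputable def epsP (a : ℤ → ℤ → ℕ) (N : ℕ) (p : ℤ) : ℤ :=
  sSup {A : ℤ | ∃ k : ℤ, k ≤ p ∧ A = Acoef a N p k}

/-- `A_k^{*(p)}(a) = ∑_{t ≥ k+1} (a_{p,t} - a_{p+1,t+1})`; all terms with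
`t > p + N` vanish, so the sum equals the finite sum over `k+1 ≤ t ≤ p + N`. -/
noncomputable def AstarCoef (a : ℤ → ℤ → ℕ) (N : ℕ) (p k : ℤ) : ℤ :=
  ∑ t ∈ Finset.Icc (k + 1) (p + (N : ℤ)), ((a p t : ℤ) - (a (p + 1) (t + 1) : ℤ))

/-- `ε_p^*(a) = max {A_k^{*(p)}(a) : k ≥ p}`. -/
noncomputable def epsStar (a : ℤ → ℤ → ℕ) (N : ℕ) (p : ℤ) : ℤ :=
  sSup {A : ℤ | ∃ k : ℤ, p ≤ k ∧ A = AstarCoef a N p k}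

/-- Telescoping sum over an integer interval. -/
private lemma telescope_aux (f : ℤ → ℤ) : ∀ (n : ℕ) (p0 : ℤ),
    ∑ p ∈ Finset.Icc p0 (p0 + (n : ℤ) - 1), (f (p + 1) - f p) = f (p0 + n) - f p0 := by
  intro n
  induction n with
  | zero =>
    intro p0
    rw [Finset.Icc_eq_empty (by omega)]
    simp
  | succ m ih =>
    intro p0
    have h1 : Finset.Icc p0 (p0 + ((m + 1 : ℕ) : ℤ) - 1)
        = insert (p0 + (m : ℤ)) (Finset.Icc p0 (p0 + (m : ℤ) - 1)) := by
      ext x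
      simp only [Finset.mem_Icc, Finset.mem_insert]
      push_cast
      omega
    rw [h1, Finset.sum_insert (by simp only [Finset.mem_Icc]; omega), ih]
    have e : p0 + ((m + 1 : ℕ) : ℤ) = p0 + (m : ℤ) + 1 := by push_cast; ring
    rw [e]
    ring

/-- Reindexing of `Acoef` at `k = p - r` by `s ↦ p - s`. -/
private lemma acoef_shift (a : ℤ → ℤ → ℕ) (N : ℕ) (p r : ℤ) :
    Acoef a N p (p - r) =
      ∑ u ∈ Finset.Icc r ((N : ℤ) - 1), ((a (p - u) (p + 1) : ℤ) - (a (p - u - 1) p : ℤ)) := by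
  unfold Acoef
  apply Finset.sum_nbij' (fun s => p - s) (fun u => p - u)
  · intro s hs
    simp only [Finset.mem_Icc] at hs ⊢
    omega
  · intro u hu
    simp only [Finset.mem_Icc] at hu ⊢
    omega
  · intro s _; ring
  · intro u _; ring
  · intro s _
    have h1 : p - (p - s) = s := by ring
    rw [h1]

theorem stmt13 (l : ℕ) (hl : 3 ≤ l) (a : ℤ → ℤ → ℕ) (N : ℕ) (hN : 0 < N)
    (ha : ∀ i j : ℤ, (N : ℤ) ≤ j - i → a i j = 0)
    (hper : ∀ i j : ℤ, a (i + (l : ℤ)) (j + (l : ℤ)) = a i j) :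
    (∀ p : ℤ, epsP a N p = 0) ↔
      ∃ z : ℕ → ℕ, (∃ B : ℕ, ∀ n ≥ B, z n = 0) ∧
        ∀ i j : ℤ, i < j → a i j = z (j - i).toNat := by
  have hl3 : (3 : ℤ) ≤ (l : ℤ) := by exact_mod_cast hl
  have hN1 : (1 : ℤ) ≤ (N : ℤ) := by exact_mod_cast hN
  constructor
  · intro heps
    -- Step 1: all `Acoef a N p k` with `k ≤ p` are nonpositive.
    have hbdd : ∀ p : ℤ, BddAbove {A : ℤ | ∃ k : ℤ, k ≤ p ∧ A = Acoef a N p k} := by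
      intro p
      apply Set.Finite.bddAbove
      apply Set.Finite.subset
        (Finset.finite_toSet (insert 0 ((Finset.Icc (p - N) p).image (Acoef a N p))))
      rintro A ⟨k, hk, rfl⟩
      simp only [Finset.coe_insert, Finset.coe_image, Set.mem_insert_iff, Set.mem_image,
        Finset.mem_coe, Finset.mem_Icc]
      by_cases h : k < p + 1 - N
      · left
        unfold Acoef
        rw [Finset.Icc_eq_empty (by omega)]
        simp
      · right
        exact ⟨k, ⟨by omega, hk⟩, rfl⟩
    have hle : ∀ p k : ℤ, k ≤ p → Acoef a N p k ≤ 0 := by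
      intro p k hk
      have h1 : Acoef a N p k ≤ epsP a N p :=
        le_csSup (hbdd p) ⟨k, hk, rfl⟩
      rw [heps p] at h1
      exact h1
    -- Step 2: telescoping over a period.
    have hsum0 : ∀ (u p0 : ℤ),
        ∑ p ∈ Finset.Icc p0 (p0 + (l : ℤ) - 1),
          ((a (p - u) (p + 1) : ℤ) - (a (p - u - 1) p : ℤ)) = 0 := by
      intro u p0
      have ht := telescope_aux (fun p => (a (p - u - 1) p : ℤ)) l p0
      have he : ∀ p ∈ Finset.Icc p0 (p0 + (l : ℤ) - 1),
          ((a (p - u) (p + 1) : ℤ) - (a (p - u - 1) p : ℤ))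
            = ((a (p + 1 - u - 1) (p + 1) : ℤ) - (a (p - u - 1) p : ℤ)) := by
        intro p _
        have : p + 1 - u - 1 = p - u := by ring
        rw [this]
      rw [Finset.sum_congr rfl he, ht]
      have h1 : p0 + (l : ℤ) - u - 1 = (p0 - u - 1) + (l : ℤ) := by ring
      rw [h1, hper (p0 - u - 1) p0]
      ring
    -- Step 3: each `Acoef a N p (p - r)` with `r ≥ 0` is zero.
    have hA0 : ∀ (r p : ℤ), 0 ≤ r → Acoef a N p (p - r) = 0 := by
      intro r p hr
      have hsum : ∑ q ∈ Finset.Icc p (p + (l : ℤ) - 1), Acoef a N q (q - r) = 0 := by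
        have h1 : ∀ q ∈ Finset.Icc p (p + (l : ℤ) - 1), Acoef a N q (q - r)
            = ∑ u ∈ Finset.Icc r ((N : ℤ) - 1),
                ((a (q - u) (q + 1) : ℤ) - (a (q - u - 1) q : ℤ)) :=
          fun q _ => acoef_shift a N q r
        rw [Finset.sum_congr rfl h1, Finset.sum_comm]
        exact Finset.sum_eq_zero fun u _ => hsum0 u p
      have hnp : ∀ q ∈ Finset.Icc p (p + (l : ℤ) - 1), Acoef a N q (q - r) ≤ 0 :=
        fun q _ => hle q (q - r) (by omega)
      exact (Finset.sum_eq_zero_iff_of_nonpos hnp).mp hsum p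
        (by simp only [Finset.mem_Icc]; omega)
    -- Step 4: each term vanishes.
    have hG : ∀ (p u : ℤ), 0 ≤ u → u ≤ (N : ℤ) - 1 →
        (a (p - u) (p + 1) : ℤ) - (a (p - u - 1) p : ℤ) = 0 := by
      intro p u h0 h1
      have h2 := hA0 u p h0
      have h3 := hA0 (u + 1) p (by omega)
      rw [acoef_shift] at h2 h3
      have hins : Finset.Icc u ((N : ℤ) - 1)
          = insert u (Finset.Icc (u + 1) ((N : ℤ) - 1)) := by
        ext x
        simp only [Finset.mem_Icc, Finset.mem_insert]
        omega
      rw [hins, Finset.sum_insert (by simp only [Finset.mem_Icc]; omega)] at h2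
      omega
    -- Step 5: the shift invariance `a i j = a (i-1) (j-1)`.
    have hshift : ∀ i j : ℤ, i < j → a i j = a (i - 1) (j - 1) := by
      intro i j hij
      by_cases hd : j - i ≤ (N : ℤ)
      · have h1 := hG (j - 1) (j - 1 - i) (by omega) (by omega)
        have e1 : j - 1 - (j - 1 - i) = i := by ring
        have e2 : j - 1 + 1 = j := by ring
        have e3 : j - 1 - (j - 1 - i) - 1 = i - 1 := by ring
        rw [e1, e2] at h1
        omega
      · rw [ha i j (by omega), ha (i - 1) (j - 1) (by omega)]
    -- Step 6: `a i j = a 0 (j - i)`.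
    have hdown : ∀ (n : ℕ) (i j : ℤ), i < j → a i j = a (i - n) (j - n) := by
      intro n
      induction n with
      | zero => intro i j _; simp
      | succ m ih =>
        intro i j hij
        have h1 := ih i j hij
        have h2 := hshift (i - m) (j - m) (by omega)
        rw [h1, h2]
        have e1 : i - (m : ℤ) - 1 = i - ((m + 1 : ℕ) : ℤ) := by push_cast; ring
        have e2 : j - (m : ℤ) - 1 = j - ((m + 1 : ℕ) : ℤ) := by push_cast; ring
        rw [e1, e2]
    have hup : ∀ (n : ℕ) (i j : ℤ), i < j → a i j = a (i + n) (j + n) := by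
      intro n
      induction n with
      | zero => intro i j _; simp
      | succ m ih =>
        intro i j hij
        have h1 := ih i j hij
        have h2 := hshift (i + m + 1) (j + m + 1) (by omega)
        simp only [add_sub_cancel_right] at h2
        rw [h1, ← h2]
        have e1 : i + (m : ℤ) + 1 = i + ((m + 1 : ℕ) : ℤ) := by push_cast; ring
        have e2 : j + (m : ℤ) + 1 = j + ((m + 1 : ℕ) : ℤ) := by push_cast; ring
        rw [e1, e2]
    have hconst : ∀ i j : ℤ, i < j → a i j = a 0 (j - i) := by
      intro i j hij
      by_cases h0 : 0 ≤ i
      · have h1 := hdown i.toNat i j hij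
        have e : (i.toNat : ℤ) = i := Int.toNat_of_nonneg h0
        rw [e] at h1
        simpa using h1
      · have h1 := hup (-i).toNat i j hij
        have e : ((-i).toNat : ℤ) = -i := Int.toNat_of_nonneg (by omega)
        rw [e] at h1
        rw [h1]
        congr 1 <;> ring
    refine ⟨fun n => a 0 (n : ℤ), ⟨N, fun n hn => ha 0 (n : ℤ) (by simp; exact_mod_cast hn)⟩,
      fun i j hij => ?_⟩
    rw [hconst i j hij]
    congr 1
    exact (Int.toNat_of_nonneg (by omega)).symm
  · rintro ⟨z, _, hz⟩
    intro p
    have hA : ∀ k : ℤ, k ≤ p → Acoef a N p k = 0 := by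
      intro k hk
      unfold Acoef
      apply Finset.sum_eq_zero
      intro s hs
      simp only [Finset.mem_Icc] at hs
      have h1 : a s (p + 1) = z ((p + 1) - s).toNat := hz s (p + 1) (by omega)
      have h2 : a (s - 1) p = z (p - (s - 1)).toNat := hz (s - 1) p (by omega)
      rw [h1, h2]
      have : (p + 1) - s = p - (s - 1) := by ring
      rw [this]
      ring
    have hset : {A : ℤ | ∃ k : ℤ, k ≤ p ∧ A = Acoef a N p k} = {0} := by
      ext A
      simp only [Set.mem_setOf_eq, Set.mem_singleton_iff]
      constructor
      · rintro ⟨k, hk, rfl⟩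
        exact hA k hk
      · rintro rfl
        exact ⟨p, le_refl p, (hA p (le_refl p)).symm⟩
    unfold epsP
    rw [hset]
    exact csSup_singleton 0
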